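/- Let φ be a smooth skew-morphism of the dihedral group D_n = ⟨a, b | a^n = b^2 = 1, b^{-1}ab = a^{-1}⟩ with n ≥ 3 odd. Then φ is an automorphism of D_n. -/

import Mathlib

/-- A skew-morphism of a group `A`: a permutation `φ` fixing the identity together with
a power function `pi` (a natural-number representative of the `ℤ_n`-valued power function,
`n = orderOf φ`) such that `φ (x * y) = φ x * φ ^ (pi x) y`. -/
structure SkewMorphism (A : Type*) [Group A] where
  toPerm : Equiv.Perm A
  pi : A → ℕ
  map_one' : toPerm 1 = 1
  skew : ∀ x y : A, toPerm (x * y) = toPerm x * (toPerm ^ pi x) y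

/-- The kernel of a skew-morphism: elements where the power function is `1` in `ℤ_n`. -/
def SkewMorphism.ker {A : Type*} [Group A] (S : SkewMorphism A) : Set A :=
  {x : A | S.pi x ≡ 1 [MOD orderOf S.toPerm]}

/-- The core of a skew-morphism: `⋂_{i=1}^{n} φ^i (Ker φ)`. -/
def SkewMorphism.core {A : Type*} [Group A] (S : SkewMorphism A) : Set A :=
  ⋂ i ∈ Finset.Icc 1 (orderOf S.toPerm), (S.toPerm ^ i) '' S.ker

section Aux

variable {A : Type*} [Group A] (S : SkewMorphism A)

lemma SkewMorphism.pow_congr {a b : ℕ} (h : a ≡ b [MOD orderOf S.toPerm]) (y : A) :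
    (S.toPerm ^ a) y = (S.toPerm ^ b) y := by
  rw [pow_eq_pow_iff_modEq.mpr h]

lemma SkewMorphism.pi_pow (hsmooth : ∀ x, S.pi (S.toPerm x) ≡ S.pi x [MOD orderOf S.toPerm])
    (k : ℕ) : ∀ x : A, S.pi ((S.toPerm ^ k) x) ≡ S.pi x [MOD orderOf S.toPerm] := by
  induction k with
  | zero => intro x; simp [Nat.ModEq.refl]
  | succ k ih =>
      intro x
      have h : (S.toPerm ^ (k + 1)) x = (S.toPerm ^ k) (S.toPerm x) := by
        rw [pow_succ, Equiv.Perm.mul_apply]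
      rw [h]
      exact (ih (S.toPerm x)).trans (hsmooth x)

lemma SkewMorphism.iter_skew (hsmooth : ∀ x, S.pi (S.toPerm x) ≡ S.pi x [MOD orderOf S.toPerm])
    (k : ℕ) (x y : A) :
    (S.toPerm ^ k) (x * y) = (S.toPerm ^ k) x * (S.toPerm ^ (k * S.pi x)) y := by
  induction k with
  | zero => simp
  | succ k ih =>
      have h1 : (S.toPerm ^ (k + 1)) (x * y) = S.toPerm ((S.toPerm ^ k) (x * y)) := by
        rw [pow_succ', Equiv.Perm.mul_apply]
      rw [h1, ih, S.skew]
      have h2 : S.toPerm ((S.toPerm ^ k) x) = (S.toPerm ^ (k + 1)) x := by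
        rw [pow_succ', Equiv.Perm.mul_apply]
      rw [h2]
      congr 1
      have h3 : (S.toPerm ^ S.pi ((S.toPerm ^ k) x)) ((S.toPerm ^ (k * S.pi x)) y)
          = (S.toPerm ^ (S.pi ((S.toPerm ^ k) x) + k * S.pi x)) y := by
        rw [pow_add, Equiv.Perm.mul_apply]
      rw [h3]
      refine S.pow_congr ?_ y
      calc S.pi ((S.toPerm ^ k) x) + k * S.pi x
          ≡ S.pi x + k * S.pi x [MOD orderOf S.toPerm] :=
            Nat.ModEq.add_right _ (S.pi_pow hsmooth k x)
        _ = (k + 1) * S.pi x := by ring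

lemma SkewMorphism.pi_one : S.pi 1 ≡ 1 [MOD orderOf S.toPerm] := by
  have h : S.toPerm ^ S.pi (1 : A) = S.toPerm ^ 1 := by
    ext y
    have := S.skew 1 y
    rw [one_mul, S.map_one', one_mul] at this
    rw [pow_one, ← this]
  exact pow_eq_pow_iff_modEq.mp h

lemma SkewMorphism.pi_mul (hsmooth : ∀ x, S.pi (S.toPerm x) ≡ S.pi x [MOD orderOf S.toPerm])
    (x y : A) : S.pi (x * y) ≡ S.pi x * S.pi y [MOD orderOf S.toPerm] := by
  have h : S.toPerm ^ S.pi (x * y) = S.toPerm ^ (S.pi x * S.pi y) := by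
    ext z
    have h1 := S.skew (x * y) z
    have h2 := S.skew x (y * z)
    rw [mul_assoc] at h1
    rw [S.skew x y] at h1
    rw [S.iter_skew hsmooth (S.pi x) y z] at h2
    rw [h2, mul_assoc] at h1
    exact (mul_left_cancel (mul_left_cancel h1.symm))
  exact pow_eq_pow_iff_modEq.mp h

end Aux

theorem smooth_skew_morphism_dihedral_odd (n : ℕ) (hn : 3 ≤ n) (hodd : Odd n)
    (S : SkewMorphism (DihedralGroup n))
    (hsmooth : ∀ x, S.pi (S.toPerm x) ≡ S.pi x [MOD orderOf S.toPerm]) :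
    ∀ x y : DihedralGroup n, S.toPerm (x * y) = S.toPerm x * S.toPerm y := by
  set m := orderOf S.toPerm with hm
  open DihedralGroup in
  -- every rotation is in the kernel
  have tt : S.pi (sr 0 : DihedralGroup n) * S.pi (sr 0 : DihedralGroup n) ≡ 1 [MOD m] := by
    have h1 : (sr 0 : DihedralGroup n) * sr 0 = 1 := by simp [one_def, -r_zero]
    have := S.pi_mul hsmooth (sr 0 : DihedralGroup n) (sr 0)
    rw [h1] at this
    exact this.symm.trans S.pi_one
  have uneg : ∀ i : ZMod n, S.pi (r (-i) : DihedralGroup n) ≡ S.pi (r i : DihedralGroup n) [MOD m] := by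
    intro i
    have hconj : (sr 0 : DihedralGroup n) * ((r i : DihedralGroup n) * sr 0) = r (-i) := by
      simp
    have h1 := S.pi_mul hsmooth (sr 0 : DihedralGroup n) ((r i : DihedralGroup n) * sr 0)
    rw [hconj] at h1
    have h2 := S.pi_mul hsmooth (r i : DihedralGroup n) (sr 0 : DihedralGroup n)
    calc S.pi (r (-i) : DihedralGroup n)
        ≡ S.pi (sr 0 : DihedralGroup n) * S.pi ((r i : DihedralGroup n) * sr 0) [MOD m] := h1
      _ ≡ S.pi (sr 0 : DihedralGroup n) * (S.pi (r i : DihedralGroup n) * S.pi (sr 0 : DihedralGroup n)) [MOD m] :=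
          Nat.ModEq.mul_left _ h2
      _ = S.pi (r i : DihedralGroup n) * (S.pi (sr 0 : DihedralGroup n) * S.pi (sr 0 : DihedralGroup n)) := by ring
      _ ≡ S.pi (r i : DihedralGroup n) * 1 [MOD m] := Nat.ModEq.mul_left _ tt
      _ = S.pi (r i : DihedralGroup n) := by ring
  have usq : ∀ i : ZMod n, S.pi (r i : DihedralGroup n) * S.pi (r i : DihedralGroup n) ≡ 1 [MOD m] := by
    intro i
    have h1 : (r i : DihedralGroup n) * r (-i) = 1 := by simp [one_def, -r_zero]
    have h2 := S.pi_mul hsmooth (r i : DihedralGroup n) (r (-i))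
    rw [h1] at h2
    calc S.pi (r i : DihedralGroup n) * S.pi (r i : DihedralGroup n)
        ≡ S.pi (r i : DihedralGroup n) * S.pi (r (-i) : DihedralGroup n) [MOD m] :=
          Nat.ModEq.mul_left _ (uneg i).symm
      _ ≡ S.pi ((1 : DihedralGroup n)) [MOD m] := h2.symm
      _ ≡ 1 [MOD m] := S.pi_one
  have ker_r : ∀ i : ZMod n, S.pi (r i : DihedralGroup n) ≡ 1 [MOD m] := by
    intro j
    obtain ⟨i, hi⟩ : ∃ i : ZMod n, i + i = j := by
      refine ⟨(((n + 1) / 2 : ℕ) : ZMod n) * j, ?_⟩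
      have h2 : (2 : ℕ) * ((n + 1) / 2) = n + 1 :=
        Nat.mul_div_cancel' (even_iff_two_dvd.mp (Odd.add_one hodd))
      have : ((((n + 1) / 2 : ℕ) : ZMod n) * j) + ((((n + 1) / 2 : ℕ) : ZMod n) * j)
          = (((2 : ℕ) * ((n + 1) / 2) : ℕ) : ZMod n) * j := by
        push_cast
        ring
      rw [this, h2]
      push_cast [ZMod.natCast_self]
      ring
    have h1 : (r i : DihedralGroup n) * r i = r j := by rw [r_mul_r, hi]
    have h2 := S.pi_mul hsmooth (r i : DihedralGroup n) (r i)
    rw [h1] at h2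
    exact h2.trans (usq i)
  -- pi of reflections
  have pi_sr : ∀ j : ZMod n, S.pi (sr j : DihedralGroup n) ≡ S.pi (sr 0 : DihedralGroup n) [MOD m] := by
    intro j
    have h1 : (r (-j) : DihedralGroup n) * sr 0 = sr j := by simp
    have h2 := S.pi_mul hsmooth (r (-j) : DihedralGroup n) (sr 0)
    rw [h1] at h2
    calc S.pi (sr j : DihedralGroup n)
        ≡ S.pi (r (-j) : DihedralGroup n) * S.pi (sr 0 : DihedralGroup n) [MOD m] := h2
      _ ≡ 1 * S.pi (sr 0 : DihedralGroup n) [MOD m] := Nat.ModEq.mul_right _ (ker_r (-j))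
      _ = S.pi (sr 0 : DihedralGroup n) := by ring
  -- the reflection sr 0 is in the kernel
  have ker_sr0 : S.pi (sr 0 : DihedralGroup n) ≡ 1 [MOD m] := by
    by_contra ht
    -- S.toPerm sends rotations to rotations
    have f_r : ∀ i : ZMod n, ∃ k : ZMod n, S.toPerm (r i : DihedralGroup n) = r k := by
      intro i
      cases h : S.toPerm (r i : DihedralGroup n) with
      | r k => exact ⟨k, rfl⟩
      | sr k =>
          exfalso
          have h1 : S.pi (sr k : DihedralGroup n) ≡ 1 [MOD m] := by
            have := hsmooth (r i : DihedralGroup n)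
            rw [h] at this
            exact this.trans (ker_r i)
          exact ht (((pi_sr k).symm.trans h1))
    have f_sr : ∀ j : ZMod n, ∃ c : ZMod n, S.toPerm (sr j : DihedralGroup n) = sr c := by
      intro j
      cases h : S.toPerm (sr j : DihedralGroup n) with
      | sr c => exact ⟨c, rfl⟩
      | r k =>
          exfalso
          have h1 : S.pi (r k : DihedralGroup n) ≡ S.pi (sr 0 : DihedralGroup n) [MOD m] := by
            have := hsmooth (sr j : DihedralGroup n)
            rw [h] at this
            exact this.trans (pi_sr j)
          exact ht ((h1.symm.trans (ker_r k)))
    -- φ(x*y) = S.toPerm x * S.toPerm y when x is a rotation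
    have hom_r : ∀ (i : ZMod n) (y : DihedralGroup n),
        S.toPerm ((r i : DihedralGroup n) * y) = S.toPerm (r i : DihedralGroup n) * S.toPerm y := by
      intro i y
      rw [S.skew (r i : DihedralGroup n) y, S.pow_congr (ker_r i) y, pow_one]
    have inv_r : ∀ i : ZMod n, S.toPerm (r (-i) : DihedralGroup n) = (S.toPerm (r i : DihedralGroup n))⁻¹ := by
      intro i
      have h1 : (r i : DihedralGroup n) * r (-i) = 1 := by simp [one_def, -r_zero]
      have h2 := hom_r i (r (-i) : DihedralGroup n)
      rw [h1, S.map_one'] at h2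
      exact eq_inv_of_mul_eq_one_right h2.symm
    -- φ^t = S.toPerm on rotations
    have key_r : ∀ i : ZMod n, (S.toPerm ^ S.pi (sr 0 : DihedralGroup n)) (r i : DihedralGroup n) = S.toPerm (r i : DihedralGroup n) := by
      intro i
      have hA := S.skew (sr 0 : DihedralGroup n) (r i : DihedralGroup n)
      have h1 : (sr 0 : DihedralGroup n) * r i = sr i := by simp
      have h2 : (r (-i) : DihedralGroup n) * sr 0 = sr i := by simp
      rw [h1, ← h2, hom_r (-i) (sr 0 : DihedralGroup n), inv_r i] at hA
      obtain ⟨c, hc⟩ := f_sr 0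
      obtain ⟨k, hk⟩ := f_r i
      rw [hc, hk] at hA
      have h3 : (S.toPerm ^ S.pi (sr 0 : DihedralGroup n)) (r i : DihedralGroup n)
          = (sr c : DihedralGroup n)⁻¹ * ((r k : DihedralGroup n)⁻¹ * sr c) :=
        eq_inv_mul_iff_mul_eq.mpr hA.symm
      rw [h3, hk]
      have hksr : ((r k : DihedralGroup n))⁻¹ = r (-k) := rfl
      have hsrc : ((sr c : DihedralGroup n))⁻¹ = sr c := rfl
      rw [hksr, hsrc]
      simp only [r_mul_sr, sr_mul_sr]
      congr 1
      ring
    -- φ^t = S.toPerm on reflections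
    have key_sr : ∀ j : ZMod n, (S.toPerm ^ S.pi (sr 0 : DihedralGroup n)) (sr j : DihedralGroup n) = S.toPerm (sr j : DihedralGroup n) := by
      intro j
      have h1 : (sr j : DihedralGroup n) * sr j = 1 := by simp [one_def, -r_zero]
      have h2 := S.skew (sr j : DihedralGroup n) (sr j : DihedralGroup n)
      rw [h1, S.map_one', S.pow_congr (pi_sr j) (sr j : DihedralGroup n)] at h2
      obtain ⟨c, hc⟩ := f_sr j
      have h3 : (S.toPerm ^ S.pi (sr 0 : DihedralGroup n)) (sr j : DihedralGroup n) = (S.toPerm (sr j : DihedralGroup n))⁻¹ :=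
        (eq_inv_of_mul_eq_one_right h2.symm)
      rw [h3, hc]
      rfl
    have hpow : S.toPerm ^ S.pi (sr 0 : DihedralGroup n) = S.toPerm ^ 1 := by
      ext x
      rw [pow_one]
      cases x with
      | r i => exact key_r i
      | sr j => exact key_sr j
    exact ht (pow_eq_pow_iff_modEq.mp hpow)
  -- conclude: pi x ≡ 1 for all x
  have hker : ∀ x : DihedralGroup n, S.pi x ≡ 1 [MOD m] := by
    intro x
    cases x with
    | r i => exact ker_r i
    | sr j => exact (pi_sr j).trans ker_sr0
  intro x y
  rw [S.skew x y, S.pow_congr (hker x) y, pow_one]
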